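/- In the layered digraph D built from a k-thin graph G with s colors, a node (r, {β_i^j}) in layer N_r is reachable from some node in layer N_0 if and only if the induced subgraph G[{v_1, …, v_r}] admits a list coloring with lists L, under the additional constraints that for each color i and class j, color i is forbidden for the last β_i^j vertices of V^j ∩ {v_1, …, v_r} (with respect to the ordering). -/

import Mathlib

/-- The earlier neighbours `N(v_r, j)_<` of vertex `x` in class `j`
(vertices are `0, 1, 2, …` in the consistent ordering). -/
def earlierNbrs {k : ℕ} (G : SimpleGraph ℕ) [DecidableRel G.Adj]
    (cls : ℕ → Fin k) (x : ℕ) (j : Fin k) : Finset ℕ :=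
  (Finset.range x).filter (fun p => cls p = j ∧ G.Adj x p)

/-- Reachability in the layered digraph `D`: `Reach G cls L r β` says that the node
`(r, {β_i^j})` of layer `N_r` is reachable from some node of layer `N_0 = L(v_1)`.
Layer `r` corresponds to the first `r` vertices `0, …, r-1`; an arc into layer `r+1`
colored `i` exists when `i ∈ L(v_{r+1})`, `β_i^{j(r+1)} = 0`, and its source node in
layer `r` has the parameters `β̃` of the paper. -/
inductive Reach {s k : ℕ} (G : SimpleGraph ℕ) [DecidableRel G.Adj]
    (cls : ℕ → Fin k) (L : ℕ → Finset (Fin s)) :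
    ℕ → (Fin s → Fin k → ℕ) → Prop where
  | one (β : Fin s → Fin k → ℕ) (i : Fin s) (hi : i ∈ L 0) (hβ : β i (cls 0) = 0) :
      Reach G cls L 1 β
  | step (r : ℕ) (hr : 1 ≤ r) (β : Fin s → Fin k → ℕ) (i : Fin s)
      (hi : i ∈ L r) (hβ : β i (cls r) = 0)
      (hprev : Reach G cls L r (fun i' j =>
        if i' = i then max (earlierNbrs G cls r j).card (β i' j)
        else if j = cls r then β i' j - 1 else β i' j)) :
      Reach G cls L (r + 1) β

lemma reach_one_iff {s k : ℕ} (G : SimpleGraph ℕ) [DecidableRel G.Adj]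
    (cls : ℕ → Fin k) (L : ℕ → Finset (Fin s)) (β : Fin s → Fin k → ℕ) :
    Reach G cls L 1 β ↔ ∃ i : Fin s, i ∈ L 0 ∧ β i (cls 0) = 0 := by
  constructor
  · intro h
    cases h with
    | one _ i hi hβ => exact ⟨i, hi, hβ⟩
    | step r hr _ i hi hβ hprev => omega
  · rintro ⟨i, hi, hβ⟩
    exact Reach.one β i hi hβ

lemma reach_succ_iff {s k : ℕ} (G : SimpleGraph ℕ) [DecidableRel G.Adj]
    (cls : ℕ → Fin k) (L : ℕ → Finset (Fin s)) (r : ℕ) (hr : 1 ≤ r)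
    (β : Fin s → Fin k → ℕ) :
    Reach G cls L (r + 1) β ↔ ∃ i : Fin s, i ∈ L r ∧ β i (cls r) = 0 ∧
      Reach G cls L r (fun i' j =>
        if i' = i then max (earlierNbrs G cls r j).card (β i' j)
        else if j = cls r then β i' j - 1 else β i' j) := by
  constructor
  · intro h
    cases h with
    | one _ i hi hβ => omega
    | step r' hr' _ i hi hβ hprev => exact ⟨i, hi, hβ, hprev⟩
  · rintro ⟨i, hi, hβ, hprev⟩
    exact Reach.step r hr β i hi hβ hprev

lemma count_Ico_succ {k : ℕ} (cls : ℕ → Fin k) (p r : ℕ) (hpr : p ≤ r) (j : Fin k) :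
    ((Finset.Ico p (r+1)).filter (fun q => cls q = j)).card =
    ((Finset.Ico p r).filter (fun q => cls q = j)).card + (if cls r = j then 1 else 0) := by
  rw [Nat.Ico_succ_right_eq_insert_Ico hpr, Finset.filter_insert]
  split
  · rw [Finset.card_insert_of_notMem (by simp)]
  · simp

lemma count_self {k : ℕ} (cls : ℕ → Fin k) (r : ℕ) :
    ((Finset.Ico r (r+1)).filter (fun q => cls q = cls r)).card = 1 := by
  rw [Nat.Ico_succ_singleton, Finset.filter_singleton, if_pos rfl, Finset.card_singleton]

lemma one_le_count {k : ℕ} (cls : ℕ → Fin k) (p r : ℕ) (hpr : p < r) :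
    1 ≤ ((Finset.Ico p r).filter (fun q => cls q = cls p)).card :=
  Finset.card_pos.mpr ⟨p, by simp [hpr]⟩

lemma adj_of_count_le {k : ℕ} (G : SimpleGraph ℕ) [DecidableRel G.Adj] (cls : ℕ → Fin k)
    (hcons : ∀ p q r : ℕ, p < q → q < r → cls p = cls q → G.Adj r p → G.Adj r q)
    (p r : ℕ) (hpr : p < r)
    (h : ((Finset.Ico p r).filter (fun q => cls q = cls p)).card ≤
      (earlierNbrs G cls r (cls p)).card) : G.Adj r p := by
  by_contra hadj
  have hsub : earlierNbrs G cls r (cls p) ⊆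
      (Finset.Ico (p+1) r).filter (fun q => cls q = cls p) := by
    intro q hq
    simp only [earlierNbrs, Finset.mem_filter, Finset.mem_range, Finset.mem_Ico] at hq ⊢
    refine ⟨⟨?_, hq.1⟩, hq.2.1⟩
    by_contra hqp
    push_neg at hqp
    rcases Nat.lt_or_ge q p with h1 | h1
    · exact hadj (hcons q p r h1 hpr (hq.2.1.trans rfl) hq.2.2)
    · have : q = p := le_antisymm (by omega) h1
      exact hadj (this ▸ hq.2.2)
  have hcard := Finset.card_le_card hsub
  have hins : ((Finset.Ico p r).filter (fun q => cls q = cls p)).card =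
      ((Finset.Ico (p+1) r).filter (fun q => cls q = cls p)).card + 1 := by
    rw [← Finset.insert_Ico_add_one_left_eq_Ico hpr, Finset.filter_insert, if_pos rfl,
      Finset.card_insert_of_notMem (by simp)]
  omega

lemma count_le_of_adj {k : ℕ} (G : SimpleGraph ℕ) [DecidableRel G.Adj] (cls : ℕ → Fin k)
    (hcons : ∀ p q r : ℕ, p < q → q < r → cls p = cls q → G.Adj r p → G.Adj r q)
    (p r : ℕ) (hpr : p < r) (hadj : G.Adj r p) :
    ((Finset.Ico p r).filter (fun q => cls q = cls p)).card ≤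
      (earlierNbrs G cls r (cls p)).card := by
  apply Finset.card_le_card
  intro q hq
  simp only [earlierNbrs, Finset.mem_filter, Finset.mem_range, Finset.mem_Ico] at hq ⊢
  refine ⟨hq.1.2, hq.2, ?_⟩
  rcases Nat.lt_or_ge p q with h1 | h1
  · exact hcons p q r h1 hq.1.2 hq.2.symm hadj
  · have : q = p := le_antisymm h1 hq.1.1
    exact this ▸ hadj

/-- A node `(r, {β_i^j})` of the layered digraph is reachable from layer `N_0` iff the
induced subgraph on the first `r` vertices admits a list coloring respecting `L` with the
additional constraint that color `i` is forbidden on the last `β_i^j` vertices of class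
`j` among the first `r` vertices. -/
theorem reach_iff_constrained_coloring {s k n : ℕ}
    (G : SimpleGraph ℕ) [DecidableRel G.Adj]
    (cls : ℕ → Fin k) (L : ℕ → Finset (Fin s))
    (hcons : ∀ p q r : ℕ, p < q → q < r → cls p = cls q → G.Adj r p → G.Adj r q)
    (r : ℕ) (hr1 : 1 ≤ r) (hrn : r ≤ n)
    (β : Fin s → Fin k → ℕ)
    (hnode : ∀ (i : Fin s) (j : Fin k),
      β i j ≤ (Finset.range n).sup (fun x => (earlierNbrs G cls x j).card)) :
    Reach G cls L r β ↔
      ∃ c : ℕ → Fin s,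
        (∀ p < r, c p ∈ L p) ∧
        (∀ p q : ℕ, p < r → q < r → G.Adj p q → c p ≠ c q) ∧
        (∀ p < r, ∀ i : Fin s,
          ((Finset.Ico p r).filter (fun q => cls q = cls p)).card ≤ β i (cls p) →
            c p ≠ i) := by
  revert hnode
  revert β
  revert hrn
  induction r, hr1 using Nat.le_induction with
  | base =>
    intro _ β _
    rw [reach_one_iff]
    constructor
    · rintro ⟨i, hi, hβ⟩
      refine ⟨fun _ => i, ?_, ?_, ?_⟩
      · intro p hp
        interval_cases p
        simpa using hi
      · intro p q hp hq hadj _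
        interval_cases p
        interval_cases q
        exact G.loopless.irrefl 0 hadj
      · intro p hp i' hcard heq
        interval_cases p
        rw [count_self] at hcard
        have heq' : i = i' := heq
        subst heq'
        omega
    · rintro ⟨c, hL, _, hcon⟩
      refine ⟨c 0, hL 0 one_pos, ?_⟩
      by_contra h
      refine hcon 0 one_pos (c 0) ?_ rfl
      rw [count_self]
      omega
  | succ r hr ih =>
    intro hrn β hnode
    have hrn' : r ≤ n := le_trans (Nat.le_succ r) hrn
    have hrltn : r < n := hrn
    rw [reach_succ_iff G cls L r hr β]
    constructor
    · rintro ⟨i, hi, hβ, hprev⟩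
      set β' : Fin s → Fin k → ℕ := fun i' j =>
        if i' = i then max (earlierNbrs G cls r j).card (β i' j)
        else if j = cls r then β i' j - 1 else β i' j with hβ'def
      have hnode' : ∀ (i' : Fin s) (j : Fin k),
          β' i' j ≤ (Finset.range n).sup (fun x => (earlierNbrs G cls x j).card) := by
        intro i' j
        simp only [hβ'def]
        split
        · exact max_le
            (Finset.le_sup (f := fun x => (earlierNbrs G cls x j).card)
              (Finset.mem_range.mpr hrltn)) (hnode i' j)
        · split
          · exact le_trans (Nat.sub_le _ _) (hnode i' j)
          · exact hnode i' j
      obtain ⟨c, hL, hprop, hcon⟩ := (ih hrn' β' hnode').mp hprev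
      refine ⟨fun x => if x = r then i else c x, ?_, ?_, ?_⟩
      · intro p hp
        by_cases hpr : p = r
        · simpa [hpr] using hi
        · have hplt : p < r := by omega
          simpa [hpr] using hL p hplt
      · intro p q hp hq hadj
        by_cases hpr : p = r <;> by_cases hqr : q = r
        · exfalso; rw [hpr, hqr] at hadj; exact G.loopless.irrefl r hadj
        · have hqlt : q < r := by omega
          beta_reduce
          rw [if_pos hpr, if_neg hqr]
          intro heq
          have hadjrq : G.Adj r q := by rw [← hpr]; exact hadj
          have hle := count_le_of_adj G cls hcons q r hqlt hadjrq
          refine hcon q hqlt i ?_ heq.symm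
          simp only [hβ'def, if_pos rfl]
          exact le_trans hle (le_max_left _ _)
        · have hplt : p < r := by omega
          beta_reduce
          rw [if_neg hpr, if_pos hqr]
          intro heq
          have hadjrp : G.Adj r p := by rw [← hqr]; exact hadj.symm
          have hle := count_le_of_adj G cls hcons p r hplt hadjrp
          refine hcon p hplt i ?_ heq
          simp only [hβ'def, if_pos rfl]
          exact le_trans hle (le_max_left _ _)
        · have hplt : p < r := by omega
          have hqlt : q < r := by omega
          simpa [hpr, hqr] using hprop p q hplt hqlt hadj
      · intro p hp i' hcard
        by_cases hpr : p = r
        · beta_reduce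
          rw [if_pos hpr]
          intro heq
          rw [hpr] at hcard
          rw [count_self] at hcard
          rw [← heq] at hcard
          omega
        · have hplt : p < r := by omega
          beta_reduce
          rw [if_neg hpr]
          rw [count_Ico_succ cls p r (le_of_lt hplt) (cls p)] at hcard
          have hm1 : 1 ≤ ((Finset.Ico p r).filter (fun q => cls q = cls p)).card :=
            one_le_count cls p r hplt
          by_cases hii : i' = i
          · apply hcon p hplt i'
            simp only [hβ'def]
            rw [if_pos hii]
            by_cases hjr : cls r = cls p
            · rw [if_pos hjr] at hcard
              have h0 : β i' (cls p) = 0 := by rw [hii, ← hjr]; exact hβ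
              exact absurd hcard (by omega)
            · rw [if_neg hjr] at hcard
              exact le_trans (by omega) (le_max_right _ _)
          · by_cases hjr : cls p = cls r
            · rw [if_pos hjr.symm] at hcard
              apply hcon p hplt i'
              simp only [hβ'def, if_neg hii, if_pos hjr]
              omega
            · rw [if_neg (fun h => hjr h.symm)] at hcard
              apply hcon p hplt i'
              simp only [hβ'def, if_neg hii, if_neg hjr]
              omega
    · rintro ⟨c, hL, hprop, hcon⟩
      have hβ0 : β (c r) (cls r) = 0 := by
        by_contra h
        refine hcon r (Nat.lt_succ_self r) (c r) ?_ rfl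
        rw [count_self]
        omega
      refine ⟨c r, hL r (Nat.lt_succ_self r), hβ0, ?_⟩
      set β' : Fin s → Fin k → ℕ := fun i' j =>
        if i' = c r then max (earlierNbrs G cls r j).card (β i' j)
        else if j = cls r then β i' j - 1 else β i' j with hβ'def
      have hnode' : ∀ (i' : Fin s) (j : Fin k),
          β' i' j ≤ (Finset.range n).sup (fun x => (earlierNbrs G cls x j).card) := by
        intro i' j
        simp only [hβ'def]
        split
        · exact max_le
            (Finset.le_sup (f := fun x => (earlierNbrs G cls x j).card)
              (Finset.mem_range.mpr hrltn)) (hnode i' j)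
        · split
          · exact le_trans (Nat.sub_le _ _) (hnode i' j)
          · exact hnode i' j
      refine (ih hrn' β' hnode').mpr ⟨c, ?_, ?_, ?_⟩
      · intro p hp; exact hL p (by omega)
      · intro p q hp hq hadj; exact hprop p q (by omega) (by omega) hadj
      · intro p hp i' hcard
        have hsucc := count_Ico_succ cls p r (le_of_lt hp) (cls p)
        have hm1 : 1 ≤ ((Finset.Ico p r).filter (fun q => cls q = cls p)).card :=
          one_le_count cls p r hp
        simp only [hβ'def] at hcard
        by_cases hii : i' = c r
        · rw [if_pos hii] at hcard
          rcases le_max_iff.mp hcard with hca | hca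
          · have hadj := adj_of_count_le G cls hcons p r hp hca
            rw [hii]
            exact hprop p r (by omega) (Nat.lt_succ_self r) hadj.symm
          · apply hcon p (by omega) i'
            rw [hsucc]
            by_cases hjr : cls r = cls p
            · have h0 : β i' (cls p) = 0 := by rw [hii, ← hjr]; exact hβ0
              exact absurd hca (by omega)
            · rw [if_neg hjr]
              omega
        · rw [if_neg hii] at hcard
          apply hcon p (by omega) i'
          rw [hsucc]
          by_cases hjr : cls p = cls r
          · rw [if_pos hjr] at hcard
            rw [if_pos hjr.symm]
            omega
          · rw [if_neg hjr] at hcard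
            rw [if_neg (fun h => hjr h.symm)]
            omega
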